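/- (Reimer's inequality for increasing events) For increasing events A, B ⊆ {0,1}^n, P[A ∘ B] ≤ P[A ∩ B̄], where A ∘ B denotes disjoint occurrence and B̄ is the coordinatewise colour-flip of B. -/
import Mathlib

open Finset

/-- `(x, I)` is a witness for `A`: every configuration agreeing with `x` on `I` lies in `A`. -/
def IsWitness {n : ℕ} (A : Set (Fin n → Bool)) (x : Fin n → Bool) (I : Finset (Fin n)) : Prop :=
  ∀ y : Fin n → Bool, (∀ i ∈ I, y i = x i) → y ∈ A

/-- `(A, B)` occurs disjointly on `(x, y)`: there are disjoint witness sets `I` for `A` in `x`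
and `J` for `B` in `y`. -/
def OccursDisjointly {n : ℕ} (A B : Set (Fin n → Bool)) (x y : Fin n → Bool) : Prop :=
  ∃ I J : Finset (Fin n), Disjoint I J ∧ IsWitness A x I ∧ IsWitness B y J

/-- An event is increasing if it is upward closed in the coordinatewise order. -/
def IncreasingEvent {n : ℕ} (A : Set (Fin n → Bool)) : Prop :=
  ∀ x y : Fin n → Bool, (∀ i, x i ≤ y i) → x ∈ A → y ∈ A

/-- Coordinatewise colour flip. -/
def flipConf {n : ℕ} (x : Fin n → Bool) : Fin n → Bool := fun i => !(x i)

/-- `B̄ = {x̄ : x ∈ B}`. -/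
def flipSet {n : ℕ} (B : Set (Fin n → Bool)) : Set (Fin n → Bool) := flipConf '' B

attribute [local instance] Classical.propDecidable

/-- The disjoint occurrence event `A ∘ B`. -/
def disjOcc {n : ℕ} (A B : Set (Fin n → Bool)) : Set (Fin n → Bool) :=
  {x | OccursDisjointly A B x x}

/-- Uniform probability of an event on `{0,1}^n`. -/
noncomputable def Pr {n : ℕ} (A : Set (Fin n → Bool)) : ℝ :=
  ((Finset.univ.filter fun x => x ∈ A).card : ℝ) / 2 ^ n

/-! ### Auxiliary lemmas -/

lemma flipConf_flipConf {n : ℕ} (x : Fin n → Bool) : flipConf (flipConf x) = x := by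
  funext i; simp [flipConf]

lemma mem_flipSet_iff {n : ℕ} {B : Set (Fin n → Bool)} {x : Fin n → Bool} :
    x ∈ flipSet B ↔ flipConf x ∈ B := by
  constructor
  · rintro ⟨w, hw, rfl⟩; rwa [flipConf_flipConf]
  · intro h; exact ⟨flipConf x, h, flipConf_flipConf x⟩

lemma flipConf_cons {n : ℕ} (b : Bool) (x : Fin n → Bool) :
    flipConf (Fin.cons b x) = Fin.cons (!b) (flipConf x) := by
  funext i
  refine Fin.cases ?_ (fun j => ?_) i <;> simp [flipConf]

/-- Restriction of an event to a fixed first coordinate. -/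
def res {n : ℕ} (b : Bool) (A : Set (Fin (n + 1) → Bool)) : Set (Fin n → Bool) :=
  {x | Fin.cons b x ∈ A}

lemma res_increasing {n : ℕ} (b : Bool) {A : Set (Fin (n + 1) → Bool)}
    (hA : IncreasingEvent A) : IncreasingEvent (res b A) := by
  intro x y hxy hx
  refine hA _ _ (fun i => ?_) hx
  refine Fin.cases ?_ (fun j => ?_) i <;> simp [hxy _]

lemma res_false_subset {n : ℕ} {A : Set (Fin (n + 1) → Bool)}
    (hA : IncreasingEvent A) : res false A ⊆ res true A := by
  intro x hx
  refine hA _ _ (fun i => ?_) hx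
  refine Fin.cases ?_ (fun j => ?_) i <;> simp

lemma disjOcc_mono {n : ℕ} {A A' B B' : Set (Fin n → Bool)} (hA : A ⊆ A') (hB : B ⊆ B') :
    disjOcc A B ⊆ disjOcc A' B' := by
  rintro x ⟨I, J, hIJ, hI, hJ⟩
  exact ⟨I, J, hIJ, fun y hy => hA (hI y hy), fun y hy => hB (hJ y hy)⟩

/-- restriction of a witness set to `Fin n`. -/
noncomputable def resSet {n : ℕ} (I : Finset (Fin (n + 1))) : Finset (Fin n) :=
  Finset.univ.filter (fun i : Fin n => i.succ ∈ I)

lemma resSet_disjoint {n : ℕ} {I J : Finset (Fin (n + 1))} (h : Disjoint I J) :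
    Disjoint (resSet I) (resSet J) := by
  rw [Finset.disjoint_left] at h ⊢
  intro i hi hj
  simp only [resSet, Finset.mem_filter] at hi hj
  exact h hi.2 hj.2

lemma witness_tail {n : ℕ} {A : Set (Fin (n + 1) → Bool)} {x : Fin (n + 1) → Bool}
    {I : Finset (Fin (n + 1))} (h : IsWitness A x I) (c : Bool)
    (hc : (0 : Fin (n + 1)) ∈ I → c = x 0) :
    IsWitness (res c A) (Fin.tail x) (resSet I) := by
  intro y hy
  refine h (Fin.cons c y) (fun i hi => ?_)
  refine Fin.cases ?_ (fun j => fun hj => ?_) i hi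
  · intro h0; simpa using hc h0
  · have hj' : j ∈ resSet I := by simp [resSet, hj]
    simpa [Fin.tail] using hy j hj'

lemma res_disjOcc_false {n : ℕ} {A B : Set (Fin (n + 1) → Bool)} :
    res false (disjOcc A B) ⊆ disjOcc (res false A) (res false B) := by
  rintro x ⟨I, J, hIJ, hI, hJ⟩
  have hx0 : (Fin.cons false x : Fin (n + 1) → Bool) 0 = false := rfl
  refine ⟨resSet I, resSet J, resSet_disjoint hIJ, ?_, ?_⟩
  · have := witness_tail hI false (fun _ => hx0.symm)
    simpa [Fin.tail_cons] using this
  · have := witness_tail hJ false (fun _ => hx0.symm)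
    simpa [Fin.tail_cons] using this

lemma res_disjOcc_true {n : ℕ} {A B : Set (Fin (n + 1) → Bool)} :
    res true (disjOcc A B) ⊆
      disjOcc (res false A) (res true B) ∪ disjOcc (res true A) (res false B) := by
  rintro x ⟨I, J, hIJ, hI, hJ⟩
  have hx0 : (Fin.cons true x : Fin (n + 1) → Bool) 0 = true := rfl
  by_cases h0 : (0 : Fin (n + 1)) ∈ J
  · -- 0 ∈ J, so 0 ∉ I
    have h0I : (0 : Fin (n + 1)) ∉ I := fun hI0 => (Finset.disjoint_left.mp hIJ hI0) h0
    left
    refine ⟨resSet I, resSet J, resSet_disjoint hIJ, ?_, ?_⟩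
    · have := witness_tail hI false (fun h => absurd h h0I)
      simpa [Fin.tail_cons] using this
    · have := witness_tail hJ true (fun _ => hx0.symm)
      simpa [Fin.tail_cons] using this
  · right
    refine ⟨resSet I, resSet J, resSet_disjoint hIJ, ?_, ?_⟩
    · have := witness_tail hI true (fun _ => hx0.symm)
      simpa [Fin.tail_cons] using this
    · have := witness_tail hJ false (fun h => absurd h h0)
      simpa [Fin.tail_cons] using this

lemma res_inter_flip {n : ℕ} (b : Bool) (A B : Set (Fin (n + 1) → Bool)) :
    res b (A ∩ flipSet B) = res b A ∩ flipSet (res (!b) B) := by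
  ext x
  simp only [res, Set.mem_setOf_eq, Set.mem_inter_iff, mem_flipSet_iff, flipConf_cons]

/-- splitting cardinality along the first coordinate. -/
lemma ncard_split {n : ℕ} (A : Set (Fin (n + 1) → Bool)) :
    A.ncard = (res false A).ncard + (res true A).ncard := by
  classical
  have e1 : ↥A ≃ {p : Bool × (Fin n → Bool) // Fin.cons p.1 p.2 ∈ A} := by
    refine Equiv.subtypeEquiv (Fin.consEquiv (fun _ => Bool)).symm (fun x => ?_)
    have hx : Fin.cons (x 0) (fun i : Fin n => x i.succ) = x := by
      funext i; refine Fin.cases rfl (fun j => rfl) i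
    constructor
    · intro h; simpa [Fin.consEquiv, hx] using h
    · intro h; simpa [Fin.consEquiv, hx] using h
  have e2 : {p : Bool × (Fin n → Bool) // Fin.cons p.1 p.2 ∈ A} ≃
      Σ b : Bool, {x : Fin n → Bool // Fin.cons b x ∈ A} :=
    Equiv.subtypeProdEquivSigmaSubtype (fun b x => Fin.cons b x ∈ A)
  rw [← Nat.card_coe_set_eq, ← Nat.card_coe_set_eq, ← Nat.card_coe_set_eq,
    Nat.card_eq_fintype_card, Nat.card_eq_fintype_card, Nat.card_eq_fintype_card,
    Fintype.card_congr (e1.trans e2), Fintype.card_sigma, Fintype.sum_bool, Nat.add_comm]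
  congr 1

/-- The key counting inequality, by induction on `n`. -/
lemma ncard_key : ∀ n (A B : Set (Fin n → Bool)),
    IncreasingEvent A → IncreasingEvent B →
    (disjOcc A B).ncard ≤ (A ∩ flipSet B).ncard := by
  intro n
  induction n with
  | zero =>
    intro A B hA hB
    refine Set.ncard_le_ncard ?_ (Set.toFinite _)
    rintro x ⟨I, J, hIJ, hI, hJ⟩
    refine ⟨hI x (fun i _ => rfl), ?_⟩
    rw [mem_flipSet_iff]
    exact hJ (flipConf x) (fun i _ => i.elim0)
  | succ n ih =>
    intro A B hA hB
    have hA0 : IncreasingEvent (res false A) := res_increasing _ hA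
    have hA1 : IncreasingEvent (res true A) := res_increasing _ hA
    have hB0 : IncreasingEvent (res false B) := res_increasing _ hB
    have hB1 : IncreasingEvent (res true B) := res_increasing _ hB
    have hsub : res false (disjOcc A B) ⊆
        disjOcc (res false A) (res true B) ∩ disjOcc (res true A) (res false B) := by
      intro x hx
      have h00 := res_disjOcc_false hx
      exact ⟨disjOcc_mono (Set.Subset.refl _) (res_false_subset hB) h00,
        disjOcc_mono (res_false_subset hA) (Set.Subset.refl _) h00⟩
    calc (disjOcc A B).ncard
        = (res false (disjOcc A B)).ncard + (res true (disjOcc A B)).ncard :=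
          ncard_split _
      _ ≤ (disjOcc (res false A) (res true B) ∩ disjOcc (res true A) (res false B)).ncard
            + (disjOcc (res false A) (res true B) ∪ disjOcc (res true A) (res false B)).ncard :=
          Nat.add_le_add (Set.ncard_le_ncard hsub (Set.toFinite _))
            (Set.ncard_le_ncard res_disjOcc_true (Set.toFinite _))
      _ = (disjOcc (res false A) (res true B)).ncard
            + (disjOcc (res true A) (res false B)).ncard := by
          rw [Nat.add_comm]
          exact Set.ncard_union_add_ncard_inter _ _ (Set.toFinite _) (Set.toFinite _)
      _ ≤ (res false A ∩ flipSet (res true B)).ncard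
            + (res true A ∩ flipSet (res false B)).ncard :=
          Nat.add_le_add (ih _ _ hA0 hB1) (ih _ _ hA1 hB0)
      _ = (A ∩ flipSet B).ncard := by
          rw [ncard_split (A ∩ flipSet B), res_inter_flip, res_inter_flip,
            Bool.not_false, Bool.not_true]

lemma Pr_eq_ncard {n : ℕ} (A : Set (Fin n → Bool)) :
    Pr A = (A.ncard : ℝ) / 2 ^ n := by
  unfold Pr
  congr 2
  rw [Set.ncard_eq_toFinset_card']
  congr 1
  ext x
  simp

/-- Reimer's inequality for increasing events: `P[A ∘ B] ≤ P[A ∩ B̄]`. -/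
theorem reimer_increasing {n : ℕ} (A B : Set (Fin n → Bool))
    (hA : IncreasingEvent A) (hB : IncreasingEvent B) :
    Pr (disjOcc A B) ≤ Pr (A ∩ flipSet B) := by
  rw [Pr_eq_ncard, Pr_eq_ncard]
  have h : ((disjOcc A B).ncard : ℝ) ≤ ((A ∩ flipSet B).ncard : ℝ) := by
    exact_mod_cast ncard_key n A B hA hB
  exact div_le_div_of_nonneg_right h (by positivity)
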